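/- Closed-form minimizer of Nesterov's hard function: let n ≥ 1, b, c, d > 0, and L(θ) = (a/4){(1/2)[b(θ^{(1)})² + c∑_{i=1}^{n-1}(θ^{(i)} − θ^{(i+1)})² + b(θ^{(n)})²] − dθ^{(1)}} for a > 0. Then the unique minimizer θ* has coordinates θ*^{(i)} = d[((n−i)b + c)/((n−1)b² + 2bc)] for 1 ≤ i ≤ n, and in particular θ* is independent of a. -/

import Mathlib

lemma alg_aux (N b c d a X Y S Δ : ℝ) (hΔe : Δ = N * b ^ 2 + 2 * b * c) (hΔ : Δ ≠ 0) :
    a / 4 * (1 / 2 * (b * X ^ 2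
        + c * (S + 2 * (d * b / Δ) * ((X - d * (N * b + c) / Δ) - (Y - d * c / Δ))
            + N * (d * b / Δ) ^ 2)
        + b * Y ^ 2) - d * X)
    = a / 4 * (1 / 2 * (b * (d * (N * b + c) / Δ) ^ 2 + c * (N * (d * b / Δ) ^ 2)
        + b * (d * c / Δ) ^ 2) - d * (d * (N * b + c) / Δ))
      + a / 8 * (b * (X - d * (N * b + c) / Δ) ^ 2 + c * S + b * (Y - d * c / Δ) ^ 2) := by
  field_simp
  rw [hΔe]
  ring

theorem stmt17 (n : ℕ) (hn : 1 ≤ n) (a b c d : ℝ)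
    (ha : 0 < a) (hb : 0 < b) (hc : 0 < c) (hd : 0 < d)
    (Lf : (Fin n → ℝ) → ℝ)
    (hLf : ∀ θ : Fin n → ℝ, Lf θ = (a / 4) *
      ((1 / 2) * (b * (θ ⟨0, by omega⟩) ^ 2
        + c * ∑ i : Fin (n - 1),
            (θ ⟨i.1, by have := i.2; omega⟩ - θ ⟨i.1 + 1, by have := i.2; omega⟩) ^ 2
        + b * (θ ⟨n - 1, by omega⟩) ^ 2)
      - d * θ ⟨0, by omega⟩))
    (θstar : Fin n → ℝ)
    (hθstar : ∀ i : Fin n,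
      θstar i = d * (((n : ℝ) - (i : ℕ) - 1) * b + c) / (((n : ℝ) - 1) * b ^ 2 + 2 * b * c)) :
    (∀ θ : Fin n → ℝ, Lf θstar ≤ Lf θ) ∧
    (∀ θ : Fin n → ℝ, (∀ θ' : Fin n → ℝ, Lf θ ≤ Lf θ') → θ = θstar) := by
  have tele_aux : ∀ (n : ℕ) (hn : 1 ≤ n) (f : Fin n → ℝ),
      ∑ i : Fin (n - 1), (f ⟨i.1, by have := i.2; omega⟩ - f ⟨i.1 + 1, by have := i.2; omega⟩)
        = f ⟨0, by omega⟩ - f ⟨n - 1, by omega⟩ := by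
    intro n hn f
    set g : ℕ → ℝ := fun k => if h : k < n then f ⟨k, h⟩ else 0 with hg
    have h1 : ∀ i : Fin (n - 1),
        (f ⟨i.1, by have := i.2; omega⟩ - f ⟨i.1 + 1, by have := i.2; omega⟩)
          = g i.1 - g (i.1 + 1) := by
      intro i
      have hi := i.2
      rw [hg]
      simp only [dif_pos (by omega : i.1 < n), dif_pos (by omega : i.1 + 1 < n)]
    rw [Finset.sum_congr rfl (fun i _ => h1 i),
      Fin.sum_univ_eq_sum_range (fun k => g k - g (k + 1)) (n - 1),
      Finset.sum_range_sub' g]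
    rw [hg]
    simp only [dif_pos (by omega : 0 < n), dif_pos (by omega : n - 1 < n)]
  have hn1 : (1 : ℝ) ≤ (n : ℝ) := by exact_mod_cast hn
  set Δ : ℝ := ((n : ℝ) - 1) * b ^ 2 + 2 * b * c with hΔdef
  have hΔ : 0 < Δ := by
    have h1 : (0:ℝ) ≤ ((n : ℝ) - 1) * b ^ 2 :=
      mul_nonneg (by linarith) (sq_nonneg b)
    have h2 : (0:ℝ) < 2 * b * c := by positivity
    rw [hΔdef]; linarith
  have hΔ' : Δ ≠ 0 := ne_of_gt hΔ
  have hcast : ((n - 1 : ℕ) : ℝ) = (n : ℝ) - 1 := by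
    rw [Nat.cast_sub hn, Nat.cast_one]
  -- constant gap of θstar
  have gap : ∀ i : Fin (n - 1),
      θstar ⟨i.1, by have := i.2; omega⟩ - θstar ⟨i.1 + 1, by have := i.2; omega⟩
        = d * b / Δ := by
    intro i
    rw [hθstar, hθstar]
    simp only [Fin.val_mk]
    push_cast
    field_simp
    ring
  have θstar0 : θstar ⟨0, by omega⟩ = d * (((n : ℝ) - 1) * b + c) / Δ := by
    rw [hθstar]; norm_num
  have θstarl : θstar ⟨n - 1, by omega⟩ = d * c / Δ := by
    rw [hθstar, Fin.val_mk, hcast]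
    ring_nf
  -- sum of squared gaps of θstar
  have sumstar : ∑ i : Fin (n - 1),
      (θstar ⟨i.1, by have := i.2; omega⟩ - θstar ⟨i.1 + 1, by have := i.2; omega⟩) ^ 2
        = ((n : ℝ) - 1) * (d * b / Δ) ^ 2 := by
    rw [Finset.sum_congr rfl (fun i _ => by rw [gap i]),
      Finset.sum_const, Finset.card_univ, Fintype.card_fin, nsmul_eq_mul, hcast]
  -- key expansion of the sum for arbitrary θ
  have hsum : ∀ θ : Fin n → ℝ, ∑ i : Fin (n - 1),
      (θ ⟨i.1, by have := i.2; omega⟩ - θ ⟨i.1 + 1, by have := i.2; omega⟩) ^ 2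
      = (∑ i : Fin (n - 1),
          ((θ ⟨i.1, by have := i.2; omega⟩ - θstar ⟨i.1, by have := i.2; omega⟩)
            - (θ ⟨i.1 + 1, by have := i.2; omega⟩ - θstar ⟨i.1 + 1, by have := i.2; omega⟩)) ^ 2)
        + 2 * (d * b / Δ) * ((θ ⟨0, by omega⟩ - θstar ⟨0, by omega⟩)
            - (θ ⟨n - 1, by omega⟩ - θstar ⟨n - 1, by omega⟩))
        + ((n : ℝ) - 1) * (d * b / Δ) ^ 2 := by
    intro θ
    have step : ∀ i : Fin (n - 1),
        (θ ⟨i.1, by have := i.2; omega⟩ - θ ⟨i.1 + 1, by have := i.2; omega⟩) ^ 2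
        = ((θ ⟨i.1, by have := i.2; omega⟩ - θstar ⟨i.1, by have := i.2; omega⟩)
            - (θ ⟨i.1 + 1, by have := i.2; omega⟩ - θstar ⟨i.1 + 1, by have := i.2; omega⟩)) ^ 2
          + 2 * (d * b / Δ) * ((θ ⟨i.1, by have := i.2; omega⟩ - θstar ⟨i.1, by have := i.2; omega⟩)
            - (θ ⟨i.1 + 1, by have := i.2; omega⟩ - θstar ⟨i.1 + 1, by have := i.2; omega⟩))
          + (d * b / Δ) ^ 2 := by
      intro i
      have hg := gap i
      have hx : θ ⟨i.1, by have := i.2; omega⟩ - θ ⟨i.1 + 1, by have := i.2; omega⟩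
          = ((θ ⟨i.1, by have := i.2; omega⟩ - θstar ⟨i.1, by have := i.2; omega⟩)
            - (θ ⟨i.1 + 1, by have := i.2; omega⟩ - θstar ⟨i.1 + 1, by have := i.2; omega⟩))
            + d * b / Δ := by linarith
      rw [hx]; ring
    rw [Finset.sum_congr rfl (fun i _ => step i), Finset.sum_add_distrib,
      Finset.sum_add_distrib, ← Finset.mul_sum,
      tele_aux n hn (fun j => θ j - θstar j),
      Finset.sum_const, Finset.card_univ, Fintype.card_fin, nsmul_eq_mul, hcast]
  -- the key identity
  have key : ∀ θ : Fin n → ℝ, Lf θ = Lf θstar + (a / 8) *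
      (b * (θ ⟨0, by omega⟩ - θstar ⟨0, by omega⟩) ^ 2
        + c * (∑ i : Fin (n - 1),
          ((θ ⟨i.1, by have := i.2; omega⟩ - θstar ⟨i.1, by have := i.2; omega⟩)
            - (θ ⟨i.1 + 1, by have := i.2; omega⟩ - θstar ⟨i.1 + 1, by have := i.2; omega⟩)) ^ 2)
        + b * (θ ⟨n - 1, by omega⟩ - θstar ⟨n - 1, by omega⟩) ^ 2) := by
    intro θ
    rw [hLf θ, hLf θstar, hsum θ, sumstar, θstar0, θstarl]
    exact alg_aux ((n : ℝ) - 1) b c d a _ _ _ Δ hΔdef hΔ'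
  constructor
  · intro θ
    rw [key θ]
    have hS : 0 ≤ (∑ i : Fin (n - 1),
          ((θ ⟨i.1, by have := i.2; omega⟩ - θstar ⟨i.1, by have := i.2; omega⟩)
            - (θ ⟨i.1 + 1, by have := i.2; omega⟩ - θstar ⟨i.1 + 1, by have := i.2; omega⟩)) ^ 2) :=
      Finset.sum_nonneg fun i _ => sq_nonneg _
    have hEnn : 0 ≤ (b * (θ ⟨0, by omega⟩ - θstar ⟨0, by omega⟩) ^ 2
        + c * (∑ i : Fin (n - 1),
          ((θ ⟨i.1, by have := i.2; omega⟩ - θstar ⟨i.1, by have := i.2; omega⟩)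
            - (θ ⟨i.1 + 1, by have := i.2; omega⟩ - θstar ⟨i.1 + 1, by have := i.2; omega⟩)) ^ 2)
        + b * (θ ⟨n - 1, by omega⟩ - θstar ⟨n - 1, by omega⟩) ^ 2) := by
      have h1 := sq_nonneg (θ ⟨0, by omega⟩ - θstar ⟨0, by omega⟩)
      have h2 := sq_nonneg (θ ⟨n - 1, by omega⟩ - θstar ⟨n - 1, by omega⟩)
      nlinarith
    have hmul : 0 ≤ (a / 8) * (b * (θ ⟨0, by omega⟩ - θstar ⟨0, by omega⟩) ^ 2
        + c * (∑ i : Fin (n - 1),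
          ((θ ⟨i.1, by have := i.2; omega⟩ - θstar ⟨i.1, by have := i.2; omega⟩)
            - (θ ⟨i.1 + 1, by have := i.2; omega⟩ - θstar ⟨i.1 + 1, by have := i.2; omega⟩)) ^ 2)
        + b * (θ ⟨n - 1, by omega⟩ - θstar ⟨n - 1, by omega⟩) ^ 2) :=
      mul_nonneg (by linarith) hEnn
    linarith
  · intro θ hmin
    have h1 : Lf θ ≤ Lf θstar := hmin θstar
    rw [key θ] at h1
    set S : ℝ := (∑ i : Fin (n - 1),
          ((θ ⟨i.1, by have := i.2; omega⟩ - θstar ⟨i.1, by have := i.2; omega⟩)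
            - (θ ⟨i.1 + 1, by have := i.2; omega⟩ - θstar ⟨i.1 + 1, by have := i.2; omega⟩)) ^ 2)
      with hSdef
    set X : ℝ := θ ⟨0, by omega⟩ - θstar ⟨0, by omega⟩ with hXdef
    set Y : ℝ := θ ⟨n - 1, by omega⟩ - θstar ⟨n - 1, by omega⟩ with hYdef
    have hS : 0 ≤ S := hSdef ▸ Finset.sum_nonneg fun i _ => sq_nonneg _
    have p1 : 0 ≤ b * X ^ 2 := mul_nonneg hb.le (sq_nonneg X)
    have p2 : 0 ≤ c * S := mul_nonneg hc.le hS
    have p3 : 0 ≤ b * Y ^ 2 := mul_nonneg hb.le (sq_nonneg Y)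
    have hE : b * X ^ 2 + c * S + b * Y ^ 2 ≤ 0 := by
      have h2 : a / 8 * (b * X ^ 2 + c * S + b * Y ^ 2) ≤ a / 8 * 0 := by
        rw [mul_zero]; linarith
      exact le_of_mul_le_mul_left h2 (by linarith)
    have hX0 : X = 0 := by
      have h2 : b * X ^ 2 ≤ b * 0 := by rw [mul_zero]; linarith
      have h3 : X ^ 2 ≤ 0 := le_of_mul_le_mul_left h2 hb
      exact pow_eq_zero_iff two_ne_zero |>.mp (le_antisymm h3 (sq_nonneg X))
    have hS0 : S = 0 := by
      have h2 : c * S ≤ c * 0 := by rw [mul_zero]; linarith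
      exact le_antisymm (le_of_mul_le_mul_left h2 hc) hS
    have hsum0 : (∑ i : Fin (n - 1),
          ((θ ⟨i.1, by have := i.2; omega⟩ - θstar ⟨i.1, by have := i.2; omega⟩)
            - (θ ⟨i.1 + 1, by have := i.2; omega⟩ - θstar ⟨i.1 + 1, by have := i.2; omega⟩)) ^ 2)
        = 0 := by rw [← hSdef]; exact hS0
    have hdiff : ∀ i : Fin (n - 1),
        (θ ⟨i.1, by have := i.2; omega⟩ - θstar ⟨i.1, by have := i.2; omega⟩)
          - (θ ⟨i.1 + 1, by have := i.2; omega⟩ - θstar ⟨i.1 + 1, by have := i.2; omega⟩) = 0 := by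
      intro i
      have hall := (Finset.sum_eq_zero_iff_of_nonneg
        (fun j (_ : j ∈ Finset.univ) => sq_nonneg _)).mp hsum0 i (Finset.mem_univ i)
      exact pow_eq_zero_iff two_ne_zero |>.mp hall
    -- canonical ℕ-indexed difference function
    set w : ℕ → ℝ := fun k => if h : k < n then θ ⟨k, h⟩ - θstar ⟨k, h⟩ else 0 with hw
    have w0 : w 0 = 0 := by
      rw [hw]
      simp only [dif_pos (show 0 < n by omega)]
      exact hX0
    have wstep : ∀ k, k < n - 1 → w (k + 1) = w k := by
      intro k hk
      have hkn : k < n := by omega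
      have hk1n : k + 1 < n := by omega
      have h' : (θ ⟨k, hkn⟩ - θstar ⟨k, hkn⟩)
          - (θ ⟨k + 1, hk1n⟩ - θstar ⟨k + 1, hk1n⟩) = 0 := hdiff ⟨k, hk⟩
      rw [hw]
      simp only [dif_pos hkn, dif_pos hk1n]
      linarith
    have wzero : ∀ k, k < n → w k = 0 := by
      intro k
      induction k with
      | zero => intro _; exact w0
      | succ k ih => intro hk; rw [wstep k (by omega)]; exact ih (by omega)
    funext i
    have hz : w i.1 = 0 := wzero i.1 i.2
    rw [hw] at hz
    simp only [dif_pos i.2] at hz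
    have hz' : θ i - θstar i = 0 := hz
    linarith
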